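/- Let η = (η^{0'}, η^{1'}) ∈ ℂ^2 be nonzero and ξ = (ξ_0, ξ_1) ∈ ℂ^2. Then the linear system ξ_A = i·X_{AA'} η^{A'} (A ∈ {0,1}) admits a Hermitian 2×2 matrix solution X if and only if ξ_0·conj(η^{0'}) + ξ_1·conj(η^{1'}) + conj(ξ_0)·η^{0'} + conj(ξ_1)·η^{1'} = 0. -/

import Mathlib

open Matrix Complex

/-- For nonzero `η ∈ ℂ²` and `ξ ∈ ℂ²`, the incidence relation
`ξ_A = i · ∑_{A'} X_{AA'} η^{A'}` admits a Hermitian 2×2 matrix solution `X`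
if and only if `ξ₀ conj(η⁰) + ξ₁ conj(η¹) + conj(ξ₀) η⁰ + conj(ξ₁) η¹ = 0`. -/
theorem incidence_solvable_iff (ξ η : Fin 2 → ℂ) (hη : η ≠ 0) :
    (∃ X : Matrix (Fin 2) (Fin 2) ℂ, X.IsHermitian ∧
        ∀ A : Fin 2, ξ A = Complex.I * ∑ A' : Fin 2, X A A' * η A') ↔
      ξ 0 * (starRingEnd ℂ) (η 0) + ξ 1 * (starRingEnd ℂ) (η 1) +
        (starRingEnd ℂ) (ξ 0) * η 0 + (starRingEnd ℂ) (ξ 1) * η 1 = 0 := by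
  constructor
  · rintro ⟨X, hX, hξ⟩
    have h0 := hξ 0
    have h1 := hξ 1
    simp only [Fin.sum_univ_two] at h0 h1
    have e00 : (starRingEnd ℂ) (X 0 0) = X 0 0 := hX.apply 0 0
    have e11 : (starRingEnd ℂ) (X 1 1) = X 1 1 := hX.apply 1 1
    have e01 : (starRingEnd ℂ) (X 1 0) = X 0 1 := hX.apply 0 1
    have e10 : (starRingEnd ℂ) (X 0 1) = X 1 0 := hX.apply 1 0
    rw [h0, h1]
    simp only [map_add, _root_.map_mul, Complex.conj_I, e00, e11, e01, e10]
    ring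
  · intro h
    have hc0 : (η 0) * (starRingEnd ℂ) (η 0) + (η 1) * (starRingEnd ℂ) (η 1) ≠ 0 := by
      rw [Complex.mul_conj, Complex.mul_conj]
      norm_cast
      intro hc
      have := Complex.normSq_nonneg (η 0)
      have := Complex.normSq_nonneg (η 1)
      have h0 : Complex.normSq (η 0) = 0 := by linarith
      have h1 : Complex.normSq (η 1) = 0 := by linarith
      apply hη
      funext i
      fin_cases i
      · exact Complex.normSq_eq_zero.mp h0
      · exact Complex.normSq_eq_zero.mp h1
    set c : ℂ := (η 0) * (starRingEnd ℂ) (η 0) + (η 1) * (starRingEnd ℂ) (η 1) with hcdef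
    have hc' : (starRingEnd ℂ) (η 0) * η 0 + (starRingEnd ℂ) (η 1) * η 1 = c := by
      rw [hcdef]; ring
    refine ⟨fun A B => (-Complex.I * ξ A * (starRingEnd ℂ) (η B) +
        Complex.I * η A * (starRingEnd ℂ) (ξ B)) / c -
        (-Complex.I * ((starRingEnd ℂ) (η 0) * ξ 0 + (starRingEnd ℂ) (η 1) * ξ 1)) *
          η A * (starRingEnd ℂ) (η B) / (c * c), ?_, ?_⟩
    · ext i j
      change star ((fun A B => (-Complex.I * ξ A * (starRingEnd ℂ) (η B) +
        Complex.I * η A * (starRingEnd ℂ) (ξ B)) / c -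
        (-Complex.I * ((starRingEnd ℂ) (η 0) * ξ 0 + (starRingEnd ℂ) (η 1) * ξ 1)) *
          η A * (starRingEnd ℂ) (η B) / (c * c) : Fin 2 → Fin 2 → ℂ) j i) = _
      beta_reduce
      simp only [Matrix.conjTranspose_apply, star_def, map_sub, map_div₀, _root_.map_mul,
        map_add, map_neg, Complex.conj_I, Complex.conj_conj, hcdef]
      rw [← hcdef] at *
      simp only [hc']
      field_simp
      linear_combination (-(η i * (starRingEnd ℂ) (η j))) * h
    · intro A
      simp only [Fin.sum_univ_two]
      field_simp
      linear_combination (-(Complex.I^2 * η A * c)) * h + (ξ A * c^2) * Complex.I_sq +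
        (-(Complex.I^2 * (-(ξ A * c) + η A * ((starRingEnd ℂ) (η 0) * ξ 0 + (starRingEnd ℂ) (η 1) * ξ 1)))) * hc'
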